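/- arXiv:2509.00922 — 3 statements merged into one kernel-verified Lean document; each statement's English description precedes it below -/
import Mathlib

section
/- Let α ∈ ℝ with α ≠ 0, and let f = (f₁,f₂) : ℝ² → ℝ² be a C² vector field compactly supported in 𝔻. Then L_α f(x) = 0 for all x ∈ ℝ² if and only if there exists a C³ scalar function φ : ℝ² → ℝ such that f₁ = ∂̃₁φ and f₂ = ∂̃₂φ, where ∂̃₁ = −(1+α)u₁u₂∂₁ + (1−α)u₂²∂₂ and ∂̃₂ = (1−α)u₁²∂₁ − (1+α)u₁u₂∂₂. -/
open MeasureTheory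

noncomputable section

open Set Metric

lemma basis_apply (L : (ℝ × ℝ) →L[ℝ] ℝ) (ξ : ℝ × ℝ) :
    L ξ = ξ.1 * L (1, 0) + ξ.2 * L (0, 1) := by
  have h : ξ = ξ.1 • ((1:ℝ), (0:ℝ)) + ξ.2 • ((0:ℝ), (1:ℝ)) := by
    ext <;> simp
  calc L ξ = L (ξ.1 • ((1:ℝ), (0:ℝ)) + ξ.2 • ((0:ℝ), (1:ℝ))) := by rw [← h]
    _ = ξ.1 * L (1, 0) + ξ.2 * L (0, 1) := by
        rw [map_add, _root_.map_smul, _root_.map_smul]; simp [smul_eq_mul]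

lemma hcs_line {E : Type*} [NormedAddCommGroup E] {g : ℝ × ℝ → E}
    (hgc : HasCompactSupport g) {w : ℝ × ℝ} (hw : w ≠ 0) (x : ℝ × ℝ) :
    HasCompactSupport (fun t : ℝ => g (x + t • w)) := by
  obtain ⟨R, hR⟩ := hgc.isBounded.subset_closedBall 0
  have hwpos : (0:ℝ) < ‖w‖ := norm_pos_iff.mpr hw
  set M : ℝ := (R + ‖x‖) / ‖w‖
  have hsub : Function.support (fun t : ℝ => g (x + t • w)) ⊆ Icc (-M) M := by
    intro t ht
    have hmem : x + t • w ∈ tsupport g := subset_tsupport g ht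
    have hnorm : ‖x + t • w‖ ≤ R := by simpa using hR hmem
    have h1 : ‖t • w‖ ≤ R + ‖x‖ := by
      calc ‖t • w‖ = ‖x + t • w - x‖ := by ring_nf
        _ ≤ ‖x + t • w‖ + ‖x‖ := norm_sub_le _ _
        _ ≤ R + ‖x‖ := by linarith
    have h2 : |t| * ‖w‖ ≤ R + ‖x‖ := by
      rwa [norm_smul, Real.norm_eq_abs] at h1
    have h3 : |t| ≤ M := by
      rw [le_div_iff₀ hwpos]; linarith
    exact abs_le.mp h3
  have : tsupport (fun t : ℝ => g (x + t • w)) ⊆ Icc (-M) M :=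
    closure_minimal hsub isClosed_Icc
  exact IsCompact.of_isClosed_subset isCompact_Icc (isClosed_tsupport _) this

lemma integrable_line {E : Type*} [NormedAddCommGroup E] {g : ℝ × ℝ → E}
    (hg : Continuous g) (hgc : HasCompactSupport g) {w : ℝ × ℝ} (hw : w ≠ 0) (x : ℝ × ℝ) :
    Integrable (fun t : ℝ => g (x + t • w)) (volume.restrict (Ioi 0)) := by
  have hc : Continuous fun t : ℝ => g (x + t • w) := by fun_prop
  exact (hc.integrable_of_hasCompactSupport (hcs_line hgc hw x)).restrict

lemma hasFDerivAt_X {g : ℝ × ℝ → ℝ} (hg : ContDiff ℝ 1 g) (hgc : HasCompactSupport g)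
    {w : ℝ × ℝ} (hw : w ≠ 0) (x₀ : ℝ × ℝ) :
    HasFDerivAt (fun x => ∫ t in Ioi (0:ℝ), g (x + t • w))
      (∫ t in Ioi (0:ℝ), fderiv ℝ g (x₀ + t • w)) x₀ := by
  have hgcont : Continuous g := hg.continuous
  have hg' : Continuous (fderiv ℝ g) := hg.continuous_fderiv one_ne_zero
  have hgd : Differentiable ℝ g := hg.differentiable one_ne_zero
  obtain ⟨R, hR⟩ := hgc.isBounded.subset_closedBall 0
  obtain ⟨C, hC⟩ := (hgc.fderiv ℝ).exists_bound_of_continuous hg'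
  have hwpos : (0:ℝ) < ‖w‖ := norm_pos_iff.mpr hw
  set M : ℝ := (R + ‖x₀‖ + 1) / ‖w‖ with hM
  have hCnn : 0 ≤ C := le_trans (norm_nonneg _) (hC 0)
  set bound : ℝ → ℝ := Set.indicator (Icc (0:ℝ) M) (fun _ => C) with hbound
  have key : ∀ t : ℝ, 0 < t → ∀ x ∈ ball x₀ 1,
      ‖fderiv ℝ g (x + t • w)‖ ≤ bound t := by
    intro t ht x hx
    by_cases htM : t ≤ M
    · have : bound t = C := by
        rw [hbound, Set.indicator_of_mem (Set.mem_Icc.mpr ⟨ht.le, htM⟩)]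
      rw [this]; exact hC _
    · push_neg at htM
      have hxn : ‖x‖ ≤ ‖x₀‖ + 1 := by
        have := mem_ball_iff_norm.mp hx
        calc ‖x‖ = ‖x₀ + (x - x₀)‖ := by ring_nf
          _ ≤ ‖x₀‖ + ‖x - x₀‖ := norm_add_le _ _
          _ ≤ ‖x₀‖ + 1 := by linarith
      have hout : x + t • w ∉ tsupport g := by
        intro hmem
        have h1 : ‖x + t • w‖ ≤ R := by simpa using hR hmem
        have h2 : ‖t • w‖ ≤ ‖x + t • w‖ + ‖x‖ := by
          calc ‖t • w‖ = ‖x + t • w - x‖ := by ring_nf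
            _ ≤ ‖x + t • w‖ + ‖x‖ := norm_sub_le _ _
        rw [norm_smul, Real.norm_eq_abs, abs_of_pos ht] at h2
        have : t * ‖w‖ ≤ R + ‖x₀‖ + 1 := by linarith
        have : t ≤ M := by rw [hM, le_div_iff₀ hwpos]; linarith
        linarith
      have : fderiv ℝ g (x + t • w) = 0 := fderiv_of_notMem_tsupport ℝ hout
      rw [this, hbound, Set.indicator_of_notMem (by simp [not_and_or]; intro h; linarith)]
      simp
  have hdiffall : ∀ (t : ℝ) (x : ℝ × ℝ),
      HasFDerivAt (fun y => g (y + t • w)) (fderiv ℝ g (x + t • w)) x := by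
    intro t x
    have h1 : HasFDerivAt (fun y : ℝ × ℝ => y + t • w)
        (ContinuousLinearMap.id ℝ (ℝ × ℝ)) x := (hasFDerivAt_id x).add_const (t • w)
    have h2 := (hgd (x + t • w)).hasFDerivAt.comp x h1
    simpa [Function.comp_def] using h2
  have := hasFDerivAt_integral_of_dominated_of_fderiv_le
    (F := fun x t => g (x + t • w)) (F' := fun x t => fderiv ℝ g (x + t • w))
    (x₀ := x₀) (bound := bound) (μ := volume.restrict (Ioi 0)) (s := ball x₀ 1) (ball_mem_nhds x₀ one_pos)
    ?_ ?_ ?_ ?_ ?_ ?_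
  · exact this
  · filter_upwards with x
    exact ((hgcont.comp (by fun_prop)).aestronglyMeasurable)
  · exact integrable_line hgcont hgc hw x₀
  · exact (hg'.comp (by fun_prop)).aestronglyMeasurable
  · rw [ae_restrict_iff' measurableSet_Ioi]
    filter_upwards with t ht x hx
    exact key t ht x hx
  · rw [hbound]
    exact (integrable_indicator_iff measurableSet_Icc).mpr
      (integrableOn_const measure_Icc_lt_top.ne) |>.restrict
  · filter_upwards with t x _
    exact hdiffall t x

lemma hasDerivAt_line (x w : ℝ × ℝ) (t : ℝ) :
    HasDerivAt (fun s : ℝ => x + s • w) w t := by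
  have h : HasDerivAt (fun s : ℝ => s • w) ((1:ℝ) • w) t := (hasDerivAt_id t).smul_const w
  simpa using h.const_add x

lemma hasDerivAt_comp_line {φ : ℝ × ℝ → ℝ} (hφ : Differentiable ℝ φ) (x w : ℝ × ℝ) (t : ℝ) :
    HasDerivAt (fun s : ℝ => φ (x + s • w)) (fderiv ℝ φ (x + t • w) w) t :=
  (hφ (x + t • w)).hasFDerivAt.comp_hasDerivAt t (hasDerivAt_line x w t)

lemma X_fderiv_w {g : ℝ × ℝ → ℝ} (hg : ContDiff ℝ 1 g) (hgc : HasCompactSupport g)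
    {w : ℝ × ℝ} (hw : w ≠ 0) (x : ℝ × ℝ) :
    ∫ t in Ioi (0:ℝ), fderiv ℝ g (x + t • w) w = -(g x) := by
  have hgd : Differentiable ℝ g := hg.differentiable one_ne_zero
  have hg' : Continuous (fderiv ℝ g) := hg.continuous_fderiv one_ne_zero
  have hint : IntegrableOn (fun t : ℝ => fderiv ℝ g (x + t • w) w) (Ioi 0) := by
    have hc : Continuous (fun p : ℝ × ℝ => fderiv ℝ g p w) :=
      (ContinuousLinearMap.apply ℝ ℝ w).continuous.comp hg'
    have hcs : HasCompactSupport (fun p : ℝ × ℝ => fderiv ℝ g p w) :=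
      (hgc.fderiv ℝ).comp_left (g := fun L : (ℝ × ℝ) →L[ℝ] ℝ => L w) rfl
    exact integrable_line hc hcs hw x
  -- tendsto 0
  obtain ⟨R, hR⟩ := hgc.isBounded.subset_closedBall 0
  have hwpos : (0:ℝ) < ‖w‖ := norm_pos_iff.mpr hw
  set M : ℝ := (R + ‖x‖) / ‖w‖ with hM
  have hev : ∀ t : ℝ, t > M → g (x + t • w) = 0 := by
    intro t ht
    apply image_eq_zero_of_notMem_tsupport
    intro hmem
    have h1 : ‖x + t • w‖ ≤ R := by simpa using hR hmem
    have h2 : ‖t • w‖ ≤ ‖x + t • w‖ + ‖x‖ := by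
      calc ‖t • w‖ = ‖x + t • w - x‖ := by ring_nf
        _ ≤ ‖x + t • w‖ + ‖x‖ := norm_sub_le _ _
    rw [norm_smul, Real.norm_eq_abs] at h2
    have h3 : |t| ≤ M := by rw [hM, le_div_iff₀ hwpos]; nlinarith [le_abs_self t]
    have := le_abs_self t
    linarith
  have htend : Filter.Tendsto (fun t : ℝ => g (x + t • w)) Filter.atTop (nhds 0) := by
    apply Filter.Tendsto.congr' _ tendsto_const_nhds
    filter_upwards [Filter.eventually_gt_atTop M] with t ht
    exact (hev t ht).symm
  have := integral_Ioi_of_hasDerivAt_of_tendsto' (a := 0)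
    (fun t _ => hasDerivAt_comp_line hgd x w t) hint htend
  simpa using this

lemma line_integral_of_eventually_flat {φ : ℝ × ℝ → ℝ} (hφ : Differentiable ℝ φ)
    {w x : ℝ × ℝ} {T : ℝ} (hT : 0 < T)
    (hint : IntegrableOn (fun t : ℝ => fderiv ℝ φ (x + t • w) w) (Ioi 0))
    (hzero : ∀ t ≥ T, fderiv ℝ φ (x + t • w) w = 0) :
    ∫ t in Ioi (0:ℝ), fderiv ℝ φ (x + t • w) w = φ (x + T • w) - φ x := by
  set ψ : ℝ → ℝ := fun t => φ (x + t • w) with hψ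
  have hψd : ∀ t, HasDerivAt ψ (fderiv ℝ φ (x + t • w) w) t :=
    fun t => hasDerivAt_comp_line hφ x w t
  have hconst : ∀ t ≥ T, ψ t = ψ T := by
    intro t ht
    have := constant_of_has_deriv_right_zero (f := ψ) (a := T) (b := t)
      (fun s _ => (hψd s).continuousAt.continuousWithinAt)
      (fun s hs => by
        have h0 := hψd s
        rw [hzero s hs.1] at h0
        exact h0.hasDerivWithinAt)
    exact this t ⟨ht, le_rfl⟩
  have htend : Filter.Tendsto ψ Filter.atTop (nhds (ψ T)) := by
    apply Filter.Tendsto.congr' _ tendsto_const_nhds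
    filter_upwards [Filter.eventually_ge_atTop T] with t ht
    exact (hconst t ht).symm
  have := integral_Ioi_of_hasDerivAt_of_tendsto' (a := 0)
    (fun t _ => hψd t) hint htend
  simpa [hψ] using this

/-- Euclidean dot product on `ℝ × ℝ`. -/
def dot (a b : ℝ × ℝ) : ℝ := a.1 * b.1 + a.2 * b.2

/-- Rotation by `π/2`: `w⊥ = (−w₂, w₁)`. -/
def perp (w : ℝ × ℝ) : ℝ × ℝ := (-w.2, w.1)

/-- The open unit disc in `ℝ²`. -/
def disc : Set (ℝ × ℝ) := {p : ℝ × ℝ | p.1 ^ 2 + p.2 ^ 2 < 1}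

/-- Directional derivative along a constant vector `w`. -/
def Dc (w : ℝ × ℝ) (F : ℝ × ℝ → ℝ) (x : ℝ × ℝ) : ℝ := fderiv ℝ F x w

/-- The tilde partial derivative `∂̃₁ = −(1+α)u₁u₂∂₁ + (1−α)u₂²∂₂`. -/
def pt1 (α u₁ u₂ : ℝ) (g : ℝ × ℝ → ℝ) (x : ℝ × ℝ) : ℝ :=
  -(1 + α) * u₁ * u₂ * fderiv ℝ g x (1, 0) + (1 - α) * u₂ ^ 2 * fderiv ℝ g x (0, 1)

/-- The tilde partial derivative `∂̃₂ = (1−α)u₁²∂₁ − (1+α)u₁u₂∂₂`. -/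
def pt2 (α u₁ u₂ : ℝ) (g : ℝ × ℝ → ℝ) (x : ℝ × ℝ) : ℝ :=
  (1 - α) * u₁ ^ 2 * fderiv ℝ g x (1, 0) - (1 + α) * u₁ * u₂ * fderiv ℝ g x (0, 1)

/-- Longitudinal V-line transform with weight `α` and constant branch directions. -/
def Lc (α : ℝ) (u v : ℝ × ℝ) (f : ℝ × ℝ → ℝ × ℝ) (x : ℝ × ℝ) : ℝ :=
  (- ∫ t in Set.Ioi (0 : ℝ), dot u (f (x + t • u))) +
    α * ∫ t in Set.Ioi (0 : ℝ), dot v (f (x + t • v))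

/-- Transverse V-line transform with weight `α` and constant branch directions. -/
def Tc (α : ℝ) (u v : ℝ × ℝ) (f : ℝ × ℝ → ℝ × ℝ) (x : ℝ × ℝ) : ℝ :=
  (- ∫ t in Set.Ioi (0 : ℝ), dot (perp u) (f (x + t • u))) +
    α * ∫ t in Set.Ioi (0 : ℝ), dot (perp v) (f (x + t • v))

theorem stmt15 (α : ℝ) (hα : α ≠ 0) (u₁ u₂ : ℝ)
    (hunit : u₁ ^ 2 + u₂ ^ 2 = 1) (hne : u₁ * u₂ ≠ 0)
    (f : ℝ × ℝ → ℝ × ℝ) (hf : ContDiff ℝ 2 f)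
    (hcs : HasCompactSupport f) (hsupp : tsupport f ⊆ disc) :
    (∀ x, Lc α (u₁, u₂) (-u₁, u₂) f x = 0) ↔
      ∃ φ : ℝ × ℝ → ℝ, ContDiff ℝ 3 φ ∧
        (∀ x, (f x).1 = pt1 α u₁ u₂ φ x) ∧ (∀ x, (f x).2 = pt2 α u₁ u₂ φ x) := by
  have hu₁ : u₁ ≠ 0 := fun h => hne (by simp [h])
  have hu₂ : u₂ ≠ 0 := fun h => hne (by simp [h])
  have huv : ((u₁, u₂) : ℝ × ℝ) ≠ 0 := by simp [Prod.ext_iff, hu₁]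
  have hvv : ((-u₁, u₂) : ℝ × ℝ) ≠ 0 := by simp [Prod.ext_iff, hu₁]
  have hc0 : (2 * α * u₁ * u₂ : ℝ) ≠ 0 :=
    mul_ne_zero (mul_ne_zero (mul_ne_zero two_ne_zero hα) hu₁) hu₂
  have hgu_eq : (fun p : ℝ × ℝ => dot (u₁, u₂) (f p))
      = fun p => u₁ * (f p).1 + u₂ * (f p).2 := rfl
  have hgv_eq : (fun p : ℝ × ℝ => dot (-u₁, u₂) (f p))
      = fun p => -u₁ * (f p).1 + u₂ * (f p).2 := rfl
  have hgu2 : ContDiff ℝ 2 (fun p : ℝ × ℝ => dot (u₁, u₂) (f p)) := by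
    rw [hgu_eq]; exact (contDiff_const.mul hf.fst).add (contDiff_const.mul hf.snd)
  have hgv2 : ContDiff ℝ 2 (fun p : ℝ × ℝ => dot (-u₁, u₂) (f p)) := by
    rw [hgv_eq]; exact (contDiff_const.mul hf.fst).add (contDiff_const.mul hf.snd)
  have hgu1 : ContDiff ℝ 1 (fun p : ℝ × ℝ => dot (u₁, u₂) (f p)) := hgu2.of_le (by norm_num)
  have hgv1 : ContDiff ℝ 1 (fun p : ℝ × ℝ => dot (-u₁, u₂) (f p)) := hgv2.of_le (by norm_num)
  have hgucs : HasCompactSupport (fun p : ℝ × ℝ => dot (u₁, u₂) (f p)) :=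
    hcs.comp_left (g := fun y : ℝ × ℝ => dot (u₁, u₂) y) (by simp [dot])
  have hgvcs : HasCompactSupport (fun p : ℝ × ℝ => dot (-u₁, u₂) (f p)) :=
    hcs.comp_left (g := fun y : ℝ × ℝ => dot (-u₁, u₂) y) (by simp [dot])
  constructor
  · -- construction of the potential
    intro hL
    set gu : ℝ × ℝ → ℝ := fun p => dot (u₁, u₂) (f p) with hgu_def
    set gv : ℝ × ℝ → ℝ := fun p => dot (-u₁, u₂) (f p) with hgv_def
    set A : ℝ × ℝ → ℝ := fun x => ∫ t in Ioi (0:ℝ), gu (x + t • ((u₁, u₂) : ℝ × ℝ))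
      with hA_def
    set B : ℝ × ℝ → ℝ := fun x => ∫ t in Ioi (0:ℝ), gv (x + t • ((-u₁, u₂) : ℝ × ℝ))
      with hB_def
    have hAB : ∀ x, A x = α * B x := by
      intro x
      have := hL x
      simp only [Lc] at this
      rw [hA_def, hB_def]
      simp only []
      linarith
    have hA : ∀ x, HasFDerivAt A
        (∫ t in Ioi (0:ℝ), fderiv ℝ gu (x + t • ((u₁, u₂) : ℝ × ℝ))) x :=
      fun x => hasFDerivAt_X hgu1 hgucs huv x
    have hB : ∀ x, HasFDerivAt B
        (∫ t in Ioi (0:ℝ), fderiv ℝ gv (x + t • ((-u₁, u₂) : ℝ × ℝ))) x :=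
      fun x => hasFDerivAt_X hgv1 hgvcs hvv x
    have hintu : ∀ x, Integrable (fun t : ℝ => fderiv ℝ gu (x + t • ((u₁, u₂) : ℝ × ℝ)))
        (volume.restrict (Ioi 0)) :=
      fun x => integrable_line (hgu1.continuous_fderiv one_ne_zero) (hgucs.fderiv ℝ) huv x
    have hintv : ∀ x, Integrable (fun t : ℝ => fderiv ℝ gv (x + t • ((-u₁, u₂) : ℝ × ℝ)))
        (volume.restrict (Ioi 0)) :=
      fun x => integrable_line (hgv1.continuous_fderiv one_ne_zero) (hgvcs.fderiv ℝ) hvv x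
    have hAu : ∀ x, (∫ t in Ioi (0:ℝ), fderiv ℝ gu (x + t • ((u₁, u₂) : ℝ × ℝ)))
        ((u₁, u₂) : ℝ × ℝ) = -(gu x) := by
      intro x
      rw [ContinuousLinearMap.integral_apply (hintu x)]
      exact X_fderiv_w hgu1 hgucs huv x
    have hBv : ∀ x, (∫ t in Ioi (0:ℝ), fderiv ℝ gv (x + t • ((-u₁, u₂) : ℝ × ℝ)))
        ((-u₁, u₂) : ℝ × ℝ) = -(gv x) := by
      intro x
      rw [ContinuousLinearMap.integral_apply (hintv x)]
      exact X_fderiv_w hgv1 hgvcs hvv x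
    have hAeq : ∀ x, (∫ t in Ioi (0:ℝ), fderiv ℝ gu (x + t • ((u₁, u₂) : ℝ × ℝ)))
        = α • (∫ t in Ioi (0:ℝ), fderiv ℝ gv (x + t • ((-u₁, u₂) : ℝ × ℝ))) := by
      intro x
      refine (hA x).unique ?_
      have h2 := (hB x).const_mul α
      refine h2.congr_of_eventuallyEq ?_
      filter_upwards with y
      exact hAB y
    have hE1 : ∀ x, (∫ t in Ioi (0:ℝ), fderiv ℝ gu (x + t • ((u₁, u₂) : ℝ × ℝ)))
        ((1:ℝ), (0:ℝ)) = (-(gu x) + α * gv x) / (2 * u₁) := by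
      intro x
      have h1 := hAu x
      have h2 : (∫ t in Ioi (0:ℝ), fderiv ℝ gu (x + t • ((u₁, u₂) : ℝ × ℝ)))
          ((-u₁, u₂) : ℝ × ℝ) = α * -(gv x) := by
        rw [hAeq x, ContinuousLinearMap.smul_apply, hBv x, smul_eq_mul]
      rw [basis_apply _ ((u₁, u₂) : ℝ × ℝ)] at h1
      rw [basis_apply _ ((-u₁, u₂) : ℝ × ℝ)] at h2
      simp only [] at h1 h2
      rw [eq_div_iff (by simpa using mul_ne_zero (two_ne_zero (α := ℝ)) hu₁ : (2*u₁ : ℝ) ≠ 0)]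
      linarith
    have hE2 : ∀ x, (∫ t in Ioi (0:ℝ), fderiv ℝ gu (x + t • ((u₁, u₂) : ℝ × ℝ)))
        ((0:ℝ), (1:ℝ)) = (-(gu x) - α * gv x) / (2 * u₂) := by
      intro x
      have h1 := hAu x
      have h2 : (∫ t in Ioi (0:ℝ), fderiv ℝ gu (x + t • ((u₁, u₂) : ℝ × ℝ)))
          ((-u₁, u₂) : ℝ × ℝ) = α * -(gv x) := by
        rw [hAeq x, ContinuousLinearMap.smul_apply, hBv x, smul_eq_mul]
      rw [basis_apply _ ((u₁, u₂) : ℝ × ℝ)] at h1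
      rw [basis_apply _ ((-u₁, u₂) : ℝ × ℝ)] at h2
      simp only [] at h1 h2
      rw [eq_div_iff (by simpa using mul_ne_zero (two_ne_zero (α := ℝ)) hu₂ : (2*u₂ : ℝ) ≠ 0)]
      linarith
    set c : ℝ := 2 * α * u₁ * u₂ with hc_def
    set Φ : ℝ × ℝ → (ℝ × ℝ) →L[ℝ] ℝ := fun x =>
      (c⁻¹ * ((-(gu x) + α * gv x) / (2 * u₁))) • (ContinuousLinearMap.fst ℝ ℝ ℝ) +
      (c⁻¹ * ((-(gu x) - α * gv x) / (2 * u₂))) • (ContinuousLinearMap.snd ℝ ℝ ℝ)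
      with hΦ_def
    set φ : ℝ × ℝ → ℝ := fun x => c⁻¹ * A x with hφ_def
    have hφd : ∀ x, HasFDerivAt φ
        (c⁻¹ • (∫ t in Ioi (0:ℝ), fderiv ℝ gu (x + t • ((u₁, u₂) : ℝ × ℝ)))) x :=
      fun x => (hA x).const_mul c⁻¹
    have hΦeq : ∀ x, (c⁻¹ • (∫ t in Ioi (0:ℝ), fderiv ℝ gu (x + t • ((u₁, u₂) : ℝ × ℝ))))
        = Φ x := by
      intro x
      apply ContinuousLinearMap.ext
      intro ξ
      rw [basis_apply (c⁻¹ • (∫ t in Ioi (0:ℝ), fderiv ℝ gu (x + t • ((u₁, u₂) : ℝ × ℝ)))) ξ,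
        basis_apply (Φ x) ξ]
      simp only [ContinuousLinearMap.smul_apply, smul_eq_mul, hΦ_def,
        ContinuousLinearMap.add_apply, ContinuousLinearMap.coe_fst',
        ContinuousLinearMap.coe_snd']
      rw [hE1 x, hE2 x]
      ring
    have hfderiv : ∀ x, fderiv ℝ φ x = Φ x := fun x => by
      rw [(hφd x).fderiv, hΦeq x]
    have hΦcd : ContDiff ℝ 2 Φ := by
      apply ContDiff.add
      · exact (contDiff_const.mul ((hgu2.neg.add (contDiff_const.mul hgv2)).div_const
          (2 * u₁))).smul contDiff_const
      · exact (contDiff_const.mul (((hgu2.neg).sub (contDiff_const.mul hgv2)).div_const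
          (2 * u₂))).smul contDiff_const
    have hφ3 : ContDiff ℝ 3 φ := by
      have h3 : (3 : WithTop ℕ∞) = 2 + 1 := by norm_num
      rw [h3, contDiff_succ_iff_fderiv]
      refine ⟨fun x => (hφd x).differentiableAt, ?_, ?_⟩
      · intro h; exact absurd h (by simp)
      · have hfd : fderiv ℝ φ = Φ := funext hfderiv
        rw [hfd]
        exact hΦcd
    refine ⟨φ, hφ3, ?_, ?_⟩
    · intro x
      simp only [pt1]
      rw [hfderiv x]
      simp only [hΦ_def, ContinuousLinearMap.add_apply, ContinuousLinearMap.smul_apply,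
        ContinuousLinearMap.coe_fst', ContinuousLinearMap.coe_snd', smul_eq_mul]
      have hgu_val : gu x = u₁ * (f x).1 + u₂ * (f x).2 := rfl
      have hgv_val : gv x = -u₁ * (f x).1 + u₂ * (f x).2 := rfl
      rw [hgu_val, hgv_val, hc_def]
      field_simp
      ring
    · intro x
      simp only [pt2]
      rw [hfderiv x]
      simp only [hΦ_def, ContinuousLinearMap.add_apply, ContinuousLinearMap.smul_apply,
        ContinuousLinearMap.coe_fst', ContinuousLinearMap.coe_snd', smul_eq_mul]
      have hgu_val : gu x = u₁ * (f x).1 + u₂ * (f x).2 := rfl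
      have hgv_val : gv x = -u₁ * (f x).1 + u₂ * (f x).2 := rfl
      rw [hgu_val, hgv_val, hc_def]
      field_simp
      ring
  · -- the potential makes the transform vanish
    rintro ⟨φ, hφ, h1, h2⟩ x
    have hφd : Differentiable ℝ φ := hφ.differentiable (by norm_num)
    have hout : ∀ p : ℝ × ℝ, p ∉ disc → ∀ ξ : ℝ × ℝ, fderiv ℝ φ p ξ = 0 := by
      intro p hp ξ
      have hfp : f p = 0 := image_eq_zero_of_notMem_tsupport (fun h => hp (hsupp h))
      have e1 := (h1 p).symm
      have e2 := (h2 p).symm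
      rw [hfp] at e1 e2
      simp only [pt1, pt2, Prod.fst_zero, Prod.snd_zero] at e1 e2
      have hd : (4 * α * u₁ ^ 2 * u₂ ^ 2 : ℝ) ≠ 0 :=
        mul_ne_zero (mul_ne_zero (mul_ne_zero (by norm_num) hα) (pow_ne_zero 2 hu₁))
          (pow_ne_zero 2 hu₂)
      have hX : fderiv ℝ φ p (1, 0) = 0 := by
        have hXd : fderiv ℝ φ p (1, 0) * (4 * α * u₁ ^ 2 * u₂ ^ 2) = 0 := by
          linear_combination (-(1 + α) * u₁ * u₂) * e1 - ((1 - α) * u₂ ^ 2) * e2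
        exact (mul_eq_zero.mp hXd).resolve_right hd
      have hY : fderiv ℝ φ p (0, 1) = 0 := by
        have hYd : fderiv ℝ φ p (0, 1) * (4 * α * u₁ ^ 2 * u₂ ^ 2) = 0 := by
          linear_combination (-(1 + α) * u₁ * u₂) * e2 - ((1 - α) * u₁ ^ 2) * e1
        exact (mul_eq_zero.mp hYd).resolve_right hd
      rw [basis_apply (fderiv ℝ φ p) ξ, hX, hY]
      ring
    have hdotu : ∀ p : ℝ × ℝ, dot (u₁, u₂) (f p)
        = -(2 * α * u₁ * u₂) * fderiv ℝ φ p ((u₁, u₂) : ℝ × ℝ) := by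
      intro p
      have e1 := h1 p
      have e2 := h2 p
      show u₁ * (f p).1 + u₂ * (f p).2 = _
      rw [e1, e2, basis_apply (fderiv ℝ φ p) ((u₁, u₂) : ℝ × ℝ)]
      simp only [pt1, pt2]
      ring
    have hdotv : ∀ p : ℝ × ℝ, dot (-u₁, u₂) (f p)
        = -(2 * u₁ * u₂) * fderiv ℝ φ p ((-u₁, u₂) : ℝ × ℝ) := by
      intro p
      have e1 := h1 p
      have e2 := h2 p
      show -u₁ * (f p).1 + u₂ * (f p).2 = _
      rw [e1, e2, basis_apply (fderiv ℝ φ p) ((-u₁, u₂) : ℝ × ℝ)]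
      simp only [pt1, pt2]
      ring
    set T : ℝ := (2 + |x.2|) / |u₂| with hT_def
    have hu₂abs : (0:ℝ) < |u₂| := abs_pos.mpr hu₂
    have hT : 0 < T := div_pos (by positivity) hu₂abs
    have hsec : ∀ t ≥ T, 2 ≤ |x.2 + t * u₂| := by
      intro t ht
      have h1' : T * |u₂| ≤ t * |u₂| := by
        apply mul_le_mul_of_nonneg_right ht (le_of_lt hu₂abs)
      have h2' : T * |u₂| = 2 + |x.2| := div_mul_cancel₀ _ (ne_of_gt hu₂abs)
      have h3' : |t * u₂| = t * |u₂| := by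
        rw [abs_mul, abs_of_pos (lt_of_lt_of_le hT ht)]
      have h4' : |t * u₂| ≤ |x.2 + t * u₂| + |x.2| := by
        calc |t * u₂| = |x.2 + t * u₂ - x.2| := by ring_nf
          _ ≤ |x.2 + t * u₂| + |x.2| := abs_sub _ _
      linarith
    have hnd : ∀ p : ℝ × ℝ, 2 ≤ |p.2| → p ∉ disc := by
      intro p hp hdm
      simp only [disc, Set.mem_setOf_eq] at hdm
      nlinarith [sq_nonneg p.1, sq_abs p.2]
    have hsnd_u : ∀ t : ℝ, (x + t • ((u₁, u₂) : ℝ × ℝ)).2 = x.2 + t * u₂ := fun t => by simp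
    have hsnd_v : ∀ t : ℝ, (x + t • ((-u₁, u₂) : ℝ × ℝ)).2 = x.2 + t * u₂ := fun t => by simp
    have hintu : Integrable (fun t : ℝ => dot (u₁, u₂) (f (x + t • ((u₁, u₂) : ℝ × ℝ))))
        (volume.restrict (Ioi 0)) := by
      apply integrable_line _ hgucs huv x
      rw [hgu_eq]
      exact (continuous_const.mul hf.continuous.fst).add (continuous_const.mul hf.continuous.snd)
    have hintv : Integrable (fun t : ℝ => dot (-u₁, u₂) (f (x + t • ((-u₁, u₂) : ℝ × ℝ))))
        (volume.restrict (Ioi 0)) := by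
      apply integrable_line _ hgvcs hvv x
      rw [hgv_eq]
      exact (continuous_const.mul hf.continuous.fst).add (continuous_const.mul hf.continuous.snd)
    have hIu : ∫ t in Ioi (0:ℝ), dot (u₁, u₂) (f (x + t • ((u₁, u₂) : ℝ × ℝ)))
        = -(2 * α * u₁ * u₂) * (φ (x + T • ((u₁, u₂) : ℝ × ℝ)) - φ x) := by
      have hint2 : IntegrableOn
          (fun t : ℝ => fderiv ℝ φ (x + t • ((u₁, u₂) : ℝ × ℝ)) ((u₁, u₂) : ℝ × ℝ))
          (Ioi 0) := by
        have heq : (fun t : ℝ => fderiv ℝ φ (x + t • ((u₁, u₂) : ℝ × ℝ)) ((u₁, u₂) : ℝ × ℝ))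
            = fun t => (-(2 * α * u₁ * u₂))⁻¹
                * dot (u₁, u₂) (f (x + t • ((u₁, u₂) : ℝ × ℝ))) := by
          funext t
          rw [hdotu]
          rw [inv_mul_eq_div, eq_div_iff (neg_ne_zero.mpr hc0)]
          ring
        rw [heq]
        exact hintu.const_mul _
      have hzero : ∀ t ≥ T,
          fderiv ℝ φ (x + t • ((u₁, u₂) : ℝ × ℝ)) ((u₁, u₂) : ℝ × ℝ) = 0 := by
        intro t ht
        exact hout _ (hnd _ (by rw [hsnd_u t]; exact hsec t ht)) _
      calc ∫ t in Ioi (0:ℝ), dot (u₁, u₂) (f (x + t • ((u₁, u₂) : ℝ × ℝ)))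
          = ∫ t in Ioi (0:ℝ), -(2 * α * u₁ * u₂)
              * fderiv ℝ φ (x + t • ((u₁, u₂) : ℝ × ℝ)) ((u₁, u₂) : ℝ × ℝ) := by
            apply integral_congr_ae
            filter_upwards with t
            exact hdotu _
        _ = -(2 * α * u₁ * u₂) * ∫ t in Ioi (0:ℝ),
              fderiv ℝ φ (x + t • ((u₁, u₂) : ℝ × ℝ)) ((u₁, u₂) : ℝ × ℝ) :=
            integral_const_mul _ _
        _ = -(2 * α * u₁ * u₂) * (φ (x + T • ((u₁, u₂) : ℝ × ℝ)) - φ x) := by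
            rw [line_integral_of_eventually_flat hφd hT hint2 hzero]
    have hIv : ∫ t in Ioi (0:ℝ), dot (-u₁, u₂) (f (x + t • ((-u₁, u₂) : ℝ × ℝ)))
        = -(2 * u₁ * u₂) * (φ (x + T • ((-u₁, u₂) : ℝ × ℝ)) - φ x) := by
      have hc0' : (2 * u₁ * u₂ : ℝ) ≠ 0 := mul_ne_zero (mul_ne_zero two_ne_zero hu₁) hu₂
      have hint2 : IntegrableOn
          (fun t : ℝ => fderiv ℝ φ (x + t • ((-u₁, u₂) : ℝ × ℝ)) ((-u₁, u₂) : ℝ × ℝ))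
          (Ioi 0) := by
        have heq : (fun t : ℝ => fderiv ℝ φ (x + t • ((-u₁, u₂) : ℝ × ℝ)) ((-u₁, u₂) : ℝ × ℝ))
            = fun t => (-(2 * u₁ * u₂))⁻¹
                * dot (-u₁, u₂) (f (x + t • ((-u₁, u₂) : ℝ × ℝ))) := by
          funext t
          rw [hdotv]
          rw [inv_mul_eq_div, eq_div_iff (neg_ne_zero.mpr hc0')]
          ring
        rw [heq]
        exact hintv.const_mul _
      have hzero : ∀ t ≥ T,
          fderiv ℝ φ (x + t • ((-u₁, u₂) : ℝ × ℝ)) ((-u₁, u₂) : ℝ × ℝ) = 0 := by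
        intro t ht
        exact hout _ (hnd _ (by rw [hsnd_v t]; exact hsec t ht)) _
      calc ∫ t in Ioi (0:ℝ), dot (-u₁, u₂) (f (x + t • ((-u₁, u₂) : ℝ × ℝ)))
          = ∫ t in Ioi (0:ℝ), -(2 * u₁ * u₂)
              * fderiv ℝ φ (x + t • ((-u₁, u₂) : ℝ × ℝ)) ((-u₁, u₂) : ℝ × ℝ) := by
            apply integral_congr_ae
            filter_upwards with t
            exact hdotv _
        _ = -(2 * u₁ * u₂) * ∫ t in Ioi (0:ℝ),
              fderiv ℝ φ (x + t • ((-u₁, u₂) : ℝ × ℝ)) ((-u₁, u₂) : ℝ × ℝ) :=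
            integral_const_mul _ _
        _ = -(2 * u₁ * u₂) * (φ (x + T • ((-u₁, u₂) : ℝ × ℝ)) - φ x) := by
            rw [line_integral_of_eventually_flat hφd hT hint2 hzero]
    have hseg : φ (x + T • ((u₁, u₂) : ℝ × ℝ)) = φ (x + T • ((-u₁, u₂) : ℝ × ℝ)) := by
      have hγd : ∀ s : ℝ, HasDerivAt
          (fun s : ℝ => (x + T • ((u₁, u₂) : ℝ × ℝ)) + s • ((-2 * T * u₁, 0) : ℝ × ℝ))
          ((-2 * T * u₁, 0) : ℝ × ℝ) s :=
        fun s => hasDerivAt_line _ _ s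
      have hcomp : ∀ s : ℝ, HasDerivAt
          (fun s : ℝ => φ ((x + T • ((u₁, u₂) : ℝ × ℝ)) + s • ((-2 * T * u₁, 0) : ℝ × ℝ)))
          (fderiv ℝ φ ((x + T • ((u₁, u₂) : ℝ × ℝ)) + s • ((-2 * T * u₁, 0) : ℝ × ℝ))
            ((-2 * T * u₁, 0) : ℝ × ℝ)) s :=
        fun s => (hφd _).hasFDerivAt.comp_hasDerivAt s (hγd s)
      have hγ2 : ∀ s : ℝ,
          ((x + T • ((u₁, u₂) : ℝ × ℝ)) + s • ((-2 * T * u₁, 0) : ℝ × ℝ)).2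
            = x.2 + T * u₂ := by
        intro s; simp
      have hz : ∀ s : ℝ, fderiv ℝ φ
          ((x + T • ((u₁, u₂) : ℝ × ℝ)) + s • ((-2 * T * u₁, 0) : ℝ × ℝ))
          ((-2 * T * u₁, 0) : ℝ × ℝ) = 0 := by
        intro s
        exact hout _ (hnd _ (by rw [hγ2 s]; exact hsec T le_rfl)) _
      have hconst := constant_of_has_deriv_right_zero
        (f := fun s : ℝ => φ ((x + T • ((u₁, u₂) : ℝ × ℝ)) + s • ((-2 * T * u₁, 0) : ℝ × ℝ)))
        (a := (0:ℝ)) (b := (1:ℝ))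
        (fun s _ => (hcomp s).continuousAt.continuousWithinAt)
        (fun s hs => by
          have h0 := hcomp s
          rw [hz s] at h0
          exact h0.hasDerivWithinAt)
      have h01 := hconst 1 ⟨zero_le_one, le_rfl⟩
      have hγ1 : (x + T • ((u₁, u₂) : ℝ × ℝ)) + (1:ℝ) • ((-2 * T * u₁, 0) : ℝ × ℝ)
          = x + T • ((-u₁, u₂) : ℝ × ℝ) := by
        refine Prod.ext ?_ ?_ <;> simp <;> ring
      have hγ0 : (x + T • ((u₁, u₂) : ℝ × ℝ)) + (0:ℝ) • ((-2 * T * u₁, 0) : ℝ × ℝ)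
          = x + T • ((u₁, u₂) : ℝ × ℝ) := by
        simp
      rw [hγ1, hγ0] at h01
      exact h01.symm
    simp only [Lc]
    rw [hIu, hIv, hseg]
    ring
end
end

section
/- Let α ∈ ℝ with α ≠ 0, and let f = (f₁,f₂) : ℝ² → ℝ² be a C² vector field compactly supported in 𝔻. Then T_α f(x) = 0 for all x ∈ ℝ² if and only if there exists a C³ scalar function ψ : ℝ² → ℝ such that f₁ = −∂̃₂ψ and f₂ = ∂̃₁ψ, where ∂̃₁ = −(1+α)u₁u₂∂₁ + (1−α)u₂²∂₂ and ∂̃₂ = (1−α)u₁²∂₁ − (1+α)u₁u₂∂₂. -/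
open MeasureTheory

noncomputable section

open Set Filter


lemma clm_eval (L : ℝ × ℝ →L[ℝ] ℝ) (w : ℝ × ℝ) :
    L w = w.1 * L (1, 0) + w.2 * L (0, 1) := by
  have hw : w = w.1 • ((1:ℝ), (0:ℝ)) + w.2 • ((0:ℝ), (1:ℝ)) := by
    simp [Prod.ext_iff]
  calc L w = L (w.1 • ((1:ℝ), (0:ℝ)) + w.2 • ((0:ℝ), (1:ℝ))) := by rw [← hw]
    _ = w.1 * L (1, 0) + w.2 * L (0, 1) := by
        rw [map_add, L.map_smul, L.map_smul]; simp [smul_eq_mul]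

lemma line_hcs {E : Type*} [NormedAddCommGroup E] (G : ℝ × ℝ → E)
    (hGs : HasCompactSupport G) (x w : ℝ × ℝ) (hw : w ≠ 0) :
    HasCompactSupport (fun t : ℝ => G (x + t • w)) := by
  obtain ⟨r, hr⟩ := hGs.isCompact.isBounded.subset_closedBall 0
  have hw' : 0 < ‖w‖ := norm_pos_iff.mpr hw
  set s := (r + ‖x‖) / ‖w‖ with hs
  apply HasCompactSupport.intro (isCompact_Icc (a := -s) (b := s))
  intro t ht
  apply image_eq_zero_of_notMem_tsupport
  intro hmem
  have h1 : ‖x + t • w‖ ≤ r := by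
    have := hr hmem; simpa [dist_zero_right] using this
  have h2 : ‖t • w‖ ≤ ‖x + t • w‖ + ‖x‖ := by
    calc ‖t • w‖ = ‖(x + t • w) - x‖ := by rw [add_sub_cancel_left]
      _ ≤ ‖x + t • w‖ + ‖x‖ := norm_sub_le _ _
  have h3 : |t| * ‖w‖ ≤ r + ‖x‖ := by
    rw [norm_smul, Real.norm_eq_abs] at h2; linarith
  have h4 : |t| ≤ s := by
    rw [hs, le_div_iff₀ hw']; exact h3
  exact ht (by rw [Set.mem_Icc]; exact abs_le.mp h4)

lemma line_integrable {E : Type*} [NormedAddCommGroup E] [NormedSpace ℝ E]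
    (G : ℝ × ℝ → E) (hG : Continuous G) (hGs : HasCompactSupport G) (x w : ℝ × ℝ)
    (hw : w ≠ 0) : Integrable (fun t : ℝ => G (x + t • w)) := by
  apply Continuous.integrable_of_hasCompactSupport
  · exact hG.comp (continuous_const.add (continuous_id.smul continuous_const))
  · exact line_hcs G hGs x w hw

lemma line_eventually_zero {E : Type*} [NormedAddCommGroup E] (G : ℝ × ℝ → E)
    (hGs : HasCompactSupport G) (x w : ℝ × ℝ) (hw : w ≠ 0) :
    ∀ᶠ t : ℝ in atTop, G (x + t • w) = 0 := by
  obtain ⟨r, hr⟩ := hGs.isCompact.isBounded.subset_closedBall 0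
  have hw' : 0 < ‖w‖ := norm_pos_iff.mpr hw
  filter_upwards [eventually_ge_atTop ((r + ‖x‖ + 1) / ‖w‖)] with t ht
  apply image_eq_zero_of_notMem_tsupport
  intro hmem
  have h1 : ‖x + t • w‖ ≤ r := by
    have := hr hmem; simpa [dist_zero_right] using this
  have h2 : ‖t • w‖ ≤ ‖x + t • w‖ + ‖x‖ := by
    calc ‖t • w‖ = ‖(x + t • w) - x‖ := by rw [add_sub_cancel_left]
      _ ≤ ‖x + t • w‖ + ‖x‖ := norm_sub_le _ _
  have h3 : r + ‖x‖ + 1 ≤ t * ‖w‖ := (div_le_iff₀ hw').mp ht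
  have h4 : t * ‖w‖ ≤ |t| * ‖w‖ := by
    apply mul_le_mul_of_nonneg_right (le_abs_self t) (le_of_lt hw')
  rw [norm_smul, Real.norm_eq_abs] at h2
  linarith

lemma ray_hasFDerivAt (g : ℝ × ℝ → ℝ) (hg : ContDiff ℝ 1 g) (hgs : HasCompactSupport g)
    (w : ℝ × ℝ) (hw : w ≠ 0) (x₀ : ℝ × ℝ) :
    HasFDerivAt (fun x => ∫ t in Set.Ioi (0:ℝ), g (x + t • w))
      (∫ t in Set.Ioi (0:ℝ), fderiv ℝ g (x₀ + t • w)) x₀ := by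
  have hfc : Continuous (fderiv ℝ g) := hg.continuous_fderiv one_ne_zero
  obtain ⟨C, hC⟩ := hfc.bounded_above_of_compact_support (hgs.fderiv (𝕜 := ℝ))
  obtain ⟨r, hr⟩ := hgs.isCompact.isBounded.subset_closedBall 0
  have hw' : 0 < ‖w‖ := norm_pos_iff.mpr hw
  set T := (r + ‖x₀‖ + 1) / ‖w‖ with hT
  have hdg : ∀ y, HasFDerivAt g (fderiv ℝ g y) y :=
    fun y => (hg.differentiable one_ne_zero y).hasFDerivAt
  apply hasFDerivAt_integral_of_dominated_of_fderiv_le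
    (F' := fun x t => fderiv ℝ g (x + t • w))
    (bound := Set.indicator (Set.Icc 0 T) (fun _ => C)) (s := Metric.ball x₀ 1) (Metric.ball_mem_nhds x₀ one_pos)
  · filter_upwards with x
    exact ((hg.continuous.comp
      (continuous_const.add (continuous_id.smul continuous_const))).aestronglyMeasurable)
  · exact (line_integrable g hg.continuous hgs x₀ w hw).restrict
  · exact ((hfc.comp
      (continuous_const.add (continuous_id.smul continuous_const))).aestronglyMeasurable)
  · rw [ae_restrict_iff' measurableSet_Ioi]
    apply ae_of_all
    intro t ht x hx
    rcases le_or_gt t T with h | h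
    · rw [Set.indicator_of_mem (Set.mem_Icc.mpr ⟨le_of_lt (Set.mem_Ioi.mp ht), h⟩)]
      exact hC _
    · rw [Set.indicator_of_notMem (by intro hmem; exact absurd hmem.2 (not_le.mpr h))]
      have hx' : ‖x‖ ≤ ‖x₀‖ + 1 := by
        have : ‖x - x₀‖ < 1 := by simpa [dist_eq_norm] using Metric.mem_ball.mp hx
        have h2 := norm_sub_le (x - x₀) (-x₀)
        simp at h2
        calc ‖x‖ = ‖(x - x₀) + x₀‖ := by rw [sub_add_cancel]
          _ ≤ ‖x - x₀‖ + ‖x₀‖ := norm_add_le _ _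
          _ ≤ ‖x₀‖ + 1 := by linarith
      have hzero : fderiv ℝ g (x + t • w) = 0 := by
        apply Function.notMem_support.mp
        intro hsup
        have hmem := support_fderiv_subset ℝ hsup
        have h1 : ‖x + t • w‖ ≤ r := by
          have := hr hmem; simpa [dist_zero_right] using this
        have h2 : ‖t • w‖ ≤ ‖x + t • w‖ + ‖x‖ := by
          calc ‖t • w‖ = ‖(x + t • w) - x‖ := by rw [add_sub_cancel_left]
            _ ≤ ‖x + t • w‖ + ‖x‖ := norm_sub_le _ _
        rw [norm_smul, Real.norm_eq_abs, abs_of_pos (Set.mem_Ioi.mp ht)] at h2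
        have h3 : r + ‖x₀‖ + 1 < t * ‖w‖ := by
          rw [hT] at h; exact (div_lt_iff₀ hw').mp h
        linarith
      simp [hzero]
  · apply Integrable.restrict
    rw [integrable_indicator_iff measurableSet_Icc]
    exact integrableOn_const measure_Icc_lt_top.ne
  · apply ae_of_all
    intro t x _
    have h1 : HasFDerivAt (fun y : ℝ × ℝ => y + t • w)
        (ContinuousLinearMap.id ℝ (ℝ × ℝ)) x := (hasFDerivAt_id x).add_const (t • w)
    simpa [Function.comp_def] using (hdg (x + t • w)).comp x h1


lemma line_hasDerivAt (F : ℝ × ℝ → ℝ) (hF : Differentiable ℝ F) (x w : ℝ × ℝ) (t : ℝ) :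
    HasDerivAt (fun s : ℝ => F (x + s • w)) (fderiv ℝ F (x + t • w) w) t := by
  have h1 : HasDerivAt (fun s : ℝ => x + s • w) w t := by
    simpa using ((hasDerivAt_id t).smul_const w).const_add x
  exact (hF (x + t • w)).hasFDerivAt.comp_hasDerivAt t h1

lemma ray_fderiv_apply (g : ℝ × ℝ → ℝ) (hg : ContDiff ℝ 1 g) (hgs : HasCompactSupport g)
    (w : ℝ × ℝ) (hw : w ≠ 0) (x : ℝ × ℝ) :
    (∫ t in Set.Ioi (0:ℝ), fderiv ℝ g (x + t • w)) w = - g x := by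
  have hfc : Continuous (fderiv ℝ g) := hg.continuous_fderiv one_ne_zero
  have hint : Integrable (fun t : ℝ => fderiv ℝ g (x + t • w))
      (volume.restrict (Set.Ioi (0:ℝ))) :=
    (line_integrable _ hfc (hgs.fderiv (𝕜 := ℝ)) x w hw).restrict
  rw [ContinuousLinearMap.integral_apply hint w]
  have hG : Continuous (fun y : ℝ × ℝ => fderiv ℝ g y w) :=
    (ContinuousLinearMap.apply ℝ ℝ w).continuous.comp hfc
  have hGs : HasCompactSupport (fun y : ℝ × ℝ => fderiv ℝ g y w) := by
    exact (hgs.fderiv (𝕜 := ℝ)).comp_left (g := fun L : ℝ × ℝ →L[ℝ] ℝ => L w) (by simp)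
  have key : ∫ t in Set.Ioi (0:ℝ), fderiv ℝ g (x + t • w) w
      = 0 - g (x + (0:ℝ) • w) := by
    apply MeasureTheory.integral_Ioi_of_hasDerivAt_of_tendsto'
      (f := fun t : ℝ => g (x + t • w)) (f' := fun t : ℝ => fderiv ℝ g (x + t • w) w)
      (a := 0) (m := 0)
    · intro t _
      exact line_hasDerivAt g (hg.differentiable one_ne_zero) x w t
    · exact (line_integrable _ hG hGs x w hw).restrict
    · have hev := line_eventually_zero g hgs x w hw
      exact Filter.Tendsto.congr' (hev.mono fun t h => h.symm) tendsto_const_nhds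
  rw [key]; simp


lemma ray_value (ψ : ℝ × ℝ → ℝ) (hψd : Differentiable ℝ ψ)
    (h : ℝ × ℝ → ℝ) (hh : Continuous h) (hhs : HasCompactSupport h)
    (w : ℝ × ℝ) (hw : w ≠ 0) (K : ℝ) (hK : K ≠ 0)
    (hrel : ∀ y, h y = K * fderiv ℝ ψ y w)
    (x : ℝ × ℝ) (M : ℝ)
    (hvanray : ∀ t : ℝ, M ≤ t → fderiv ℝ ψ (x + t • w) = 0) :
    ∫ t in Set.Ioi (0:ℝ), h (x + t • w) = K * (ψ (x + M • w) - ψ x) := by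
  have hf' : ∀ t : ℝ, HasDerivAt (fun s : ℝ => ψ (x + s • w)) (fderiv ℝ ψ (x + t • w) w) t :=
    fun t => line_hasDerivAt ψ hψd x w t
  have hint : Integrable (fun t : ℝ => h (x + t • w)) := line_integrable h hh hhs x w hw
  have hint2 : Integrable (fun t : ℝ => fderiv ℝ ψ (x + t • w) w) := by
    apply (hint.const_mul K⁻¹).congr
    apply Filter.Eventually.of_forall
    intro t
    show K⁻¹ * h (x + t • w) = fderiv ℝ ψ (x + t • w) w
    rw [hrel (x + t • w)]
    field_simp
  have hconst : ∀ t, M ≤ t → ψ (x + t • w) = ψ (x + M • w) := by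
    intro t ht
    have hFTC := intervalIntegral.integral_eq_sub_of_hasDerivAt
      (f := fun s : ℝ => ψ (x + s • w)) (f' := fun s : ℝ => fderiv ℝ ψ (x + s • w) w)
      (a := M) (b := t) (fun s _ => hf' s) (hint2.intervalIntegrable)
    have hzero : ∫ s in M..t, fderiv ℝ ψ (x + s • w) w = 0 := by
      rw [intervalIntegral.integral_congr (g := fun _ => (0:ℝ))]
      · simp
      · intro s hs
        rw [Set.uIcc_of_le ht] at hs
        show fderiv ℝ ψ (x + s • w) w = 0
        rw [hvanray s hs.1]
        simp
    rw [hFTC] at hzero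
    linarith
  have htend : Filter.Tendsto (fun t : ℝ => ψ (x + t • w)) Filter.atTop
      (nhds (ψ (x + M • w))) := by
    apply Filter.Tendsto.congr' _ tendsto_const_nhds
    filter_upwards [Filter.eventually_ge_atTop M] with t ht
    exact (hconst t ht).symm
  have hFTC2 : ∫ t in Set.Ioi (0:ℝ), fderiv ℝ ψ (x + t • w) w
      = ψ (x + M • w) - ψ (x + (0:ℝ) • w) := by
    apply MeasureTheory.integral_Ioi_of_hasDerivAt_of_tendsto'
      (f := fun t : ℝ => ψ (x + t • w)) (f' := fun t : ℝ => fderiv ℝ ψ (x + t • w) w)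
      (a := 0) (m := ψ (x + M • w)) (fun t _ => hf' t) hint2.integrableOn htend
  calc ∫ t in Set.Ioi (0:ℝ), h (x + t • w)
      = ∫ t in Set.Ioi (0:ℝ), K * fderiv ℝ ψ (x + t • w) w := by
        apply MeasureTheory.integral_congr_ae
        apply Filter.Eventually.of_forall
        intro t
        exact hrel (x + t • w)
    _ = K * ∫ t in Set.Ioi (0:ℝ), fderiv ℝ ψ (x + t • w) w := by
        rw [MeasureTheory.integral_const_mul]
    _ = K * (ψ (x + M • w) - ψ x) := by rw [hFTC2]; simp



set_option maxHeartbeats 2000000 in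
theorem stmt16 (α : ℝ) (hα : α ≠ 0) (u₁ u₂ : ℝ)
    (hunit : u₁ ^ 2 + u₂ ^ 2 = 1) (hne : u₁ * u₂ ≠ 0)
    (f : ℝ × ℝ → ℝ × ℝ) (hf : ContDiff ℝ 2 f)
    (hcs : HasCompactSupport f) (hsupp : tsupport f ⊆ disc) :
    (∀ x, Tc α (u₁, u₂) (-u₁, u₂) f x = 0) ↔
      ∃ ψ : ℝ × ℝ → ℝ, ContDiff ℝ 3 ψ ∧
        (∀ x, (f x).1 = -(pt2 α u₁ u₂ ψ x)) ∧ (∀ x, (f x).2 = pt1 α u₁ u₂ ψ x) := by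
  have hu₁ : u₁ ≠ 0 := fun h => hne (by simp [h])
  have hu₂ : u₂ ≠ 0 := fun h => hne (by simp [h])
  have huz : ((u₁, u₂) : ℝ × ℝ) ≠ 0 := fun h => hu₂ (by simpa using congrArg Prod.snd h)
  have hvz : ((-u₁, u₂) : ℝ × ℝ) ≠ 0 := fun h => hu₂ (by simpa using congrArg Prod.snd h)
  have hguc : ContDiff ℝ 2 (fun y => dot (perp (u₁, u₂)) (f y)) := by
    have h1 : ContDiff ℝ 2 (fun y => (f y).1) := contDiff_fst.comp hf
    have h2 : ContDiff ℝ 2 (fun y => (f y).2) := contDiff_snd.comp hf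
    have : (fun y => dot (perp ((u₁, u₂) : ℝ × ℝ)) (f y))
        = fun y => -u₂ * (f y).1 + u₁ * (f y).2 := by
      funext y; simp [dot, perp]
    rw [this]
    exact (contDiff_const.mul h1).add (contDiff_const.mul h2)
  have hgvc : ContDiff ℝ 2 (fun y => dot (perp (-u₁, u₂)) (f y)) := by
    have h1 : ContDiff ℝ 2 (fun y => (f y).1) := contDiff_fst.comp hf
    have h2 : ContDiff ℝ 2 (fun y => (f y).2) := contDiff_snd.comp hf
    have : (fun y => dot (perp ((-u₁, u₂) : ℝ × ℝ)) (f y))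
        = fun y => -u₂ * (f y).1 + -u₁ * (f y).2 := by
      funext y; simp [dot, perp]
    rw [this]
    exact (contDiff_const.mul h1).add (contDiff_const.mul h2)
  have hgus : HasCompactSupport (fun y => dot (perp ((u₁, u₂) : ℝ × ℝ)) (f y)) :=
    hcs.comp_left (g := fun p : ℝ × ℝ => dot (perp ((u₁, u₂) : ℝ × ℝ)) p) (by simp [dot])
  have hgvs : HasCompactSupport (fun y => dot (perp ((-u₁, u₂) : ℝ × ℝ)) (f y)) :=
    hcs.comp_left (g := fun p : ℝ × ℝ => dot (perp ((-u₁, u₂) : ℝ × ℝ)) p) (by simp [dot])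
  constructor
  · -- forward direction
    intro H
    set c : ℝ := (2 * α * u₁ * u₂)⁻¹ with hc_def
    set c' : ℝ := (2 * u₁ * u₂)⁻¹ with hc'_def
    set ψ : ℝ × ℝ → ℝ :=
      fun x => c * ∫ t in Set.Ioi (0:ℝ), dot (perp ((u₁, u₂) : ℝ × ℝ)) (f (x + t • ((u₁, u₂) : ℝ × ℝ))) with hψ_def
    have hTkey : ∀ x, (∫ t in Set.Ioi (0:ℝ), dot (perp ((u₁, u₂) : ℝ × ℝ)) (f (x + t • ((u₁, u₂) : ℝ × ℝ))))
        = α * ∫ t in Set.Ioi (0:ℝ), dot (perp ((-u₁, u₂) : ℝ × ℝ)) (f (x + t • ((-u₁, u₂) : ℝ × ℝ))) := by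
      intro x
      have hx := H x
      simp only [Tc] at hx
      linarith
    have hψ2 : ψ = fun x => c' * ∫ t in Set.Ioi (0:ℝ), dot (perp ((-u₁, u₂) : ℝ × ℝ)) (f (x + t • ((-u₁, u₂) : ℝ × ℝ))) := by
      funext x
      show c * _ = c' * _
      rw [hTkey x, hc_def, hc'_def]
      field_simp
    have hray_u : ∀ x, HasFDerivAt ψ
        (c • ∫ t in Set.Ioi (0:ℝ), fderiv ℝ (fun y => dot (perp ((u₁, u₂) : ℝ × ℝ)) (f y)) (x + t • ((u₁, u₂) : ℝ × ℝ))) x :=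
      fun x => (ray_hasFDerivAt _ (hguc.of_le one_le_two) hgus _ huz x).const_mul c
    have hray_v : ∀ x, HasFDerivAt ψ
        (c' • ∫ t in Set.Ioi (0:ℝ), fderiv ℝ (fun y => dot (perp ((-u₁, u₂) : ℝ × ℝ)) (f y)) (x + t • ((-u₁, u₂) : ℝ × ℝ))) x := by
      intro x
      rw [hψ2]
      exact (ray_hasFDerivAt _ (hgvc.of_le one_le_two) hgvs _ hvz x).const_mul c'
    have hdiff : Differentiable ℝ ψ := fun x => (hray_u x).differentiableAt
    have ha : ∀ x, fderiv ℝ ψ x (u₁, u₂) = -(c * dot (perp ((u₁, u₂) : ℝ × ℝ)) (f x)) := by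
      intro x
      rw [(hray_u x).fderiv, ContinuousLinearMap.smul_apply,
        ray_fderiv_apply _ (hguc.of_le one_le_two) hgus _ huz x]
      simp
    have hb : ∀ x, fderiv ℝ ψ x (-u₁, u₂) = -(c' * dot (perp ((-u₁, u₂) : ℝ × ℝ)) (f x)) := by
      intro x
      rw [(hray_v x).fderiv, ContinuousLinearMap.smul_apply,
        ray_fderiv_apply _ (hgvc.of_le one_le_two) hgvs _ hvz x]
      simp
    set p : ℝ × ℝ → ℝ := fun x =>
      (-(c * dot (perp ((u₁, u₂) : ℝ × ℝ)) (f x)) + c' * dot (perp ((-u₁, u₂) : ℝ × ℝ)) (f x)) / (2 * u₁) with hp_def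
    set q : ℝ × ℝ → ℝ := fun x =>
      (-(c * dot (perp ((u₁, u₂) : ℝ × ℝ)) (f x)) + -(c' * dot (perp ((-u₁, u₂) : ℝ × ℝ)) (f x))) / (2 * u₂) with hq_def
    have e1 : ∀ x, fderiv ℝ ψ x (1, 0) = p x := by
      intro x
      have hsmul : ((2 * u₁ : ℝ)) • ((1:ℝ), (0:ℝ)) = ((u₁, u₂) : ℝ × ℝ) - ((-u₁, u₂) : ℝ × ℝ) := by
        simp [Prod.ext_iff]
        ring
      have h2 : fderiv ℝ ψ x (((2 * u₁ : ℝ)) • ((1:ℝ), (0:ℝ)))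
          = fderiv ℝ ψ x (u₁, u₂) - fderiv ℝ ψ x (-u₁, u₂) := by
        rw [hsmul, map_sub]
      rw [(fderiv ℝ ψ x).map_smul, ha x, hb x] at h2
      have h3 : (2 * u₁) * fderiv ℝ ψ x (1, 0)
          = -(c * dot (perp ((u₁, u₂) : ℝ × ℝ)) (f x)) + c' * dot (perp ((-u₁, u₂) : ℝ × ℝ)) (f x) := by
        have := h2
        simp only [smul_eq_mul] at this
        linarith
      rw [hp_def]
      field_simp
      linarith
    have e2 : ∀ x, fderiv ℝ ψ x (0, 1) = q x := by
      intro x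
      have hsmul : ((2 * u₂ : ℝ)) • ((0:ℝ), (1:ℝ)) = ((u₁, u₂) : ℝ × ℝ) + ((-u₁, u₂) : ℝ × ℝ) := by
        simp [Prod.ext_iff]
        ring
      have h2 : fderiv ℝ ψ x (((2 * u₂ : ℝ)) • ((0:ℝ), (1:ℝ)))
          = fderiv ℝ ψ x (u₁, u₂) + fderiv ℝ ψ x (-u₁, u₂) := by
        rw [hsmul, map_add]
      rw [(fderiv ℝ ψ x).map_smul, ha x, hb x] at h2
      have h3 : (2 * u₂) * fderiv ℝ ψ x (0, 1)
          = -(c * dot (perp ((u₁, u₂) : ℝ × ℝ)) (f x)) + -(c' * dot (perp ((-u₁, u₂) : ℝ × ℝ)) (f x)) := by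
        have := h2
        simp only [smul_eq_mul] at this
        linarith
      rw [hq_def]
      field_simp
      linarith
    have hp2 : ContDiff ℝ 2 p := by
      rw [hp_def]
      exact (((contDiff_const.mul hguc).neg).add (contDiff_const.mul hgvc)).div_const _
    have hq2 : ContDiff ℝ 2 q := by
      rw [hq_def]
      exact (((contDiff_const.mul hguc).neg).add ((contDiff_const.mul hgvc).neg)).div_const _
    have hP : fderiv ℝ ψ = fun x =>
        p x • ContinuousLinearMap.fst ℝ ℝ ℝ + q x • ContinuousLinearMap.snd ℝ ℝ ℝ := by
      funext x
      apply ContinuousLinearMap.ext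
      intro w
      rw [clm_eval (fderiv ℝ ψ x) w, e1 x, e2 x]
      simp [smul_eq_mul]
      ring
    have hψ3 : ContDiff ℝ 3 ψ := by
      have h31 : (3 : WithTop ℕ∞) = 2 + 1 := by norm_num
      rw [h31]
      refine contDiff_succ_iff_fderiv.mpr ⟨hdiff, ?_, ?_⟩
      · intro h
        exact absurd h (by norm_num)
      · rw [hP]
        exact (hp2.smul contDiff_const).add (hq2.smul contDiff_const)
    refine ⟨ψ, hψ3, fun x => ?_, fun x => ?_⟩
    · have hg1 : dot (perp ((u₁, u₂) : ℝ × ℝ)) (f x) = -u₂ * (f x).1 + u₁ * (f x).2 := by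
        simp [dot, perp]
      have hg2 : dot (perp ((-u₁, u₂) : ℝ × ℝ)) (f x) = -u₂ * (f x).1 + -u₁ * (f x).2 := by
        simp [dot, perp]
      simp only [pt2, e1 x, e2 x, hp_def, hq_def, hg1, hg2, hc_def, hc'_def]
      field_simp
      ring
    · have hg1 : dot (perp ((u₁, u₂) : ℝ × ℝ)) (f x) = -u₂ * (f x).1 + u₁ * (f x).2 := by
        simp [dot, perp]
      have hg2 : dot (perp ((-u₁, u₂) : ℝ × ℝ)) (f x) = -u₂ * (f x).1 + -u₁ * (f x).2 := by
        simp [dot, perp]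
      simp only [pt1, e1 x, e2 x, hp_def, hq_def, hg1, hg2, hc_def, hc'_def]
      field_simp
      ring
  · -- reverse direction
    rintro ⟨ψ, hψ, h1, h2⟩ x
    have hψd : Differentiable ℝ ψ := hψ.differentiable (by norm_num)
    have hvan : ∀ y : ℝ × ℝ, 1 ≤ |y.2| → fderiv ℝ ψ y = 0 := by
      intro y hy
      have hfy : f y = 0 := by
        apply image_eq_zero_of_notMem_tsupport
        intro hmem
        have hd := hsupp hmem
        simp only [disc, Set.mem_setOf_eq] at hd
        have h1' : (1:ℝ) ≤ y.2 ^ 2 := by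
          have := sq_abs y.2
          nlinarith
        nlinarith [sq_nonneg y.1]
      have e1 := h1 y
      have e2 := h2 y
      rw [hfy] at e1 e2
      simp only [pt1, pt2, Prod.fst_zero, Prod.snd_zero] at e1 e2
      have h4 : (4 * α * u₁ ^ 2 * u₂ ^ 2) ≠ 0 := by
        exact mul_ne_zero (mul_ne_zero (mul_ne_zero four_ne_zero hα) (pow_ne_zero _ hu₁))
          (pow_ne_zero _ hu₂)
      have hA : fderiv ℝ ψ y (1, 0) = 0 := by
        apply mul_left_cancel₀ h4
        rw [mul_zero]
        linear_combination (-(1 - α) * u₂ ^ 2) * e1 + ((1 + α) * u₁ * u₂) * e2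
      have hB : fderiv ℝ ψ y (0, 1) = 0 := by
        apply mul_left_cancel₀ h4
        rw [mul_zero]
        linear_combination (-(1 + α) * u₁ * u₂) * e1 + ((1 - α) * u₁ ^ 2) * e2
      apply ContinuousLinearMap.ext
      intro w
      rw [clm_eval, hA, hB]
      simp
    have hDu : ∀ y, dot (perp ((u₁, u₂) : ℝ × ℝ)) (f y)
        = (-(2 * α * u₁ * u₂)) * fderiv ℝ ψ y ((u₁, u₂) : ℝ × ℝ) := by
      intro y
      rw [clm_eval (fderiv ℝ ψ y) ((u₁, u₂) : ℝ × ℝ)]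
      have hg1 : dot (perp ((u₁, u₂) : ℝ × ℝ)) (f y) = -u₂ * (f y).1 + u₁ * (f y).2 := by
        simp [dot, perp]
      rw [hg1, h1 y, h2 y]
      simp only [pt1, pt2]
      ring
    have hDv : ∀ y, dot (perp ((-u₁, u₂) : ℝ × ℝ)) (f y)
        = (-(2 * u₁ * u₂)) * fderiv ℝ ψ y ((-u₁, u₂) : ℝ × ℝ) := by
      intro y
      rw [clm_eval (fderiv ℝ ψ y) ((-u₁, u₂) : ℝ × ℝ)]
      have hg2 : dot (perp ((-u₁, u₂) : ℝ × ℝ)) (f y) = -u₂ * (f y).1 + -u₁ * (f y).2 := by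
        simp [dot, perp]
      rw [hg2, h1 y, h2 y]
      simp only [pt1, pt2]
      ring
    have hu₂' : (0:ℝ) < |u₂| := abs_pos.mpr hu₂
    set M : ℝ := (2 + |x.2|) / |u₂| with hM_def
    have hM0 : 0 < M := div_pos (by positivity) hu₂'
    have habs : ∀ t : ℝ, M ≤ t → (2:ℝ) ≤ |x.2 + t * u₂| := by
      intro t ht
      have ha1 : M * |u₂| = 2 + |x.2| := div_mul_cancel₀ _ (ne_of_gt hu₂')
      have ha2 : M * |u₂| ≤ t * |u₂| := mul_le_mul_of_nonneg_right ht (le_of_lt hu₂')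
      have ha3 : |t * u₂| = t * |u₂| := by
        rw [abs_mul, abs_of_nonneg (le_trans (le_of_lt hM0) ht)]
      have ha4 : |t * u₂| ≤ |x.2 + t * u₂| + |x.2| := by
        have hh := abs_add_le (x.2 + t * u₂) (-x.2)
        rw [abs_neg] at hh
        have he : x.2 + t * u₂ + -x.2 = t * u₂ := by ring
        rwa [he] at hh
      linarith
    have hsnd_u : ∀ t : ℝ, (x + t • ((u₁, u₂) : ℝ × ℝ)).2 = x.2 + t * u₂ := fun t => rfl
    have hsnd_v : ∀ t : ℝ, (x + t • ((-u₁, u₂) : ℝ × ℝ)).2 = x.2 + t * u₂ := fun t => rfl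
    have hvanu : ∀ t : ℝ, M ≤ t → fderiv ℝ ψ (x + t • ((u₁, u₂) : ℝ × ℝ)) = 0 := by
      intro t ht
      apply hvan
      rw [hsnd_u t]
      linarith [habs t ht]
    have hvanv : ∀ t : ℝ, M ≤ t → fderiv ℝ ψ (x + t • ((-u₁, u₂) : ℝ × ℝ)) = 0 := by
      intro t ht
      apply hvan
      rw [hsnd_v t]
      linarith [habs t ht]
    have hKu : (-(2 * α * u₁ * u₂) : ℝ) ≠ 0 := by
      simp only [neg_ne_zero]
      exact mul_ne_zero (mul_ne_zero (mul_ne_zero two_ne_zero hα) hu₁) hu₂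
    have hKv : (-(2 * u₁ * u₂) : ℝ) ≠ 0 := by
      simp only [neg_ne_zero]
      exact mul_ne_zero (mul_ne_zero two_ne_zero hu₁) hu₂
    have hrayu : ∫ t in Set.Ioi (0:ℝ), dot (perp ((u₁, u₂) : ℝ × ℝ)) (f (x + t • ((u₁, u₂) : ℝ × ℝ)))
        = (-(2 * α * u₁ * u₂)) * (ψ (x + M • ((u₁, u₂) : ℝ × ℝ)) - ψ x) :=
      ray_value ψ hψd _ hguc.continuous hgus _ huz _ hKu hDu x M hvanu
    have hrayv : ∫ t in Set.Ioi (0:ℝ), dot (perp ((-u₁, u₂) : ℝ × ℝ)) (f (x + t • ((-u₁, u₂) : ℝ × ℝ)))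
        = (-(2 * u₁ * u₂)) * (ψ (x + M • ((-u₁, u₂) : ℝ × ℝ)) - ψ x) :=
      ray_value ψ hψd _ hgvc.continuous hgvs _ hvz _ hKv hDv x M hvanv
    have hline : ψ (x + M • ((u₁, u₂) : ℝ × ℝ)) = ψ (x + M • ((-u₁, u₂) : ℝ × ℝ)) := by
      have hk' : ∀ s : ℝ, HasDerivAt (fun s : ℝ => ψ (s, x.2 + M * u₂)) 0 s := by
        intro s
        have hc1 : HasDerivAt (fun s : ℝ => ((s, x.2 + M * u₂) : ℝ × ℝ)) ((1, 0) : ℝ × ℝ) s :=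
          (hasDerivAt_id s).prodMk (hasDerivAt_const s _)
        have hc2 := (hψd (s, x.2 + M * u₂)).hasFDerivAt.comp_hasDerivAt s hc1
        have hc3 : fderiv ℝ ψ ((s, x.2 + M * u₂) : ℝ × ℝ) = 0 := by
          apply hvan
          have := habs M le_rfl
          simp only []
          linarith
        rw [hc3] at hc2
        exact hc2
      have hkconst := is_const_of_deriv_eq_zero (𝕜 := ℝ)
        (f := fun s : ℝ => ψ (s, x.2 + M * u₂))
        (fun s => (hk' s).differentiableAt) (fun s => (hk' s).deriv)
        (x.1 + M * u₁) (x.1 + M * -u₁)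
      have he1 : x + M • ((u₁, u₂) : ℝ × ℝ) = ((x.1 + M * u₁, x.2 + M * u₂) : ℝ × ℝ) := rfl
      have he2 : x + M • ((-u₁, u₂) : ℝ × ℝ) = ((x.1 + M * -u₁, x.2 + M * u₂) : ℝ × ℝ) := rfl
      rw [he1, he2]
      exact hkconst
    show Tc α (u₁, u₂) (-u₁, u₂) f x = 0
    simp only [Tc]
    rw [hrayu, hrayv, hline]
    ring

end
end

section
/- Let u, v : ℝ² → ℝ² be C¹ vector fields with |u(x)| = |v(x)| = 1 for all x, each having straight lines as integral curves. Then for all x ∈ ℝ²: (1) (D_u u)(x) = 0 and (D_u u⊥)(x) = 0; (2) (D⊥_u u)(x) = δu(x)·u⊥(x); and (3) (D_u v)(x) = c⊥_uv(x)·δv(x)·v⊥(x), where D_u and D⊥_u are applied componentwise. -/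
open MeasureTheory

noncomputable section

/-- Divergence `δg = ∂g₁/∂x₁ + ∂g₂/∂x₂` of a vector field on `ℝ²`. -/
def dvg (g : ℝ × ℝ → ℝ × ℝ) (x : ℝ × ℝ) : ℝ :=
  (fderiv ℝ g x (1, 0)).1 + (fderiv ℝ g x (0, 1)).2

lemma aux_alg (a b p1 p2 q1 q2 : ℝ) (h4 : a*a + b*b = 1)
    (h11 : a*p1 + b*q1 = 0) (h12 : a*p2 + b*q2 = 0)
    (h3 : a*(-b*p1 + a*q1) + b*(-b*p2 + a*q2) = 0) :
    (-b*p1 + a*q1 = (p1+q2)*(-b)) ∧ (-b*p2 + a*q2 = (p1+q2)*a) := by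
  constructor
  · linear_combination a*h3 + a*b*h11 + b*b*h12 - (a*q1 + b*q2)*h4
  · linear_combination b*h3 - a*a*h11 - a*b*h12 + (a*p1 + b*p2)*h4

lemma aux_line (w : ℝ × ℝ → ℝ × ℝ) (hw : ContDiff ℝ 1 w)
    (hline : ∀ (x : ℝ × ℝ) (t : ℝ), 0 ≤ t → w (x + t • w x) = w x) (x : ℝ × ℝ) :
    fderiv ℝ w x (w x) = 0 := by
  have hdw : DifferentiableAt ℝ w x := hw.differentiable one_ne_zero x
  have h1 : HasDerivAt (fun t : ℝ => x + t • w x) (w x) 0 := by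
    simpa using ((hasDerivAt_id (0:ℝ)).smul_const (w x)).const_add x
  have hA : HasFDerivAt w (fderiv ℝ w x) (x + (0:ℝ) • w x) := by
    simpa using hdw.hasFDerivAt
  have h2 : HasDerivAt (fun t : ℝ => w (x + t • w x)) (fderiv ℝ w x (w x)) 0 :=
    hA.comp_hasDerivAt 0 h1
  have h3 : HasDerivWithinAt (fun t : ℝ => w (x + t • w x)) (fderiv ℝ w x (w x))
      (Set.Ici 0) 0 := h2.hasDerivWithinAt
  have h4 : HasDerivWithinAt (fun t : ℝ => w (x + t • w x)) 0 (Set.Ici 0) 0 := by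
    have hc : HasDerivWithinAt (fun _ : ℝ => w x) 0 (Set.Ici 0) 0 :=
      (hasDerivAt_const 0 (w x)).hasDerivWithinAt
    exact hc.congr (fun t ht => hline x t ht) (by simpa using hline x 0 le_rfl)
  have hud : UniqueDiffWithinAt ℝ (Set.Ici (0:ℝ)) 0 := uniqueDiffOn_Ici 0 0 Set.self_mem_Ici
  exact (h3.derivWithin hud).symm.trans (h4.derivWithin hud)

lemma aux_orth (w : ℝ × ℝ → ℝ × ℝ) (hw : ContDiff ℝ 1 w)
    (hunit : ∀ x, (w x).1 * (w x).1 + (w x).2 * (w x).2 = 1) (x : ℝ × ℝ) (a : ℝ × ℝ) :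
    (w x).1 * (fderiv ℝ w x a).1 + (w x).2 * (fderiv ℝ w x a).2 = 0 := by
  have hdw : HasFDerivAt w (fderiv ℝ w x) x := (hw.differentiable one_ne_zero x).hasFDerivAt
  have h1 : HasFDerivAt (fun y => (w y).1)
      ((ContinuousLinearMap.fst ℝ ℝ ℝ).comp (fderiv ℝ w x)) x :=
    (ContinuousLinearMap.fst ℝ ℝ ℝ).hasFDerivAt.comp x hdw
  have h2 : HasFDerivAt (fun y => (w y).2)
      ((ContinuousLinearMap.snd ℝ ℝ ℝ).comp (fderiv ℝ w x)) x :=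
    (ContinuousLinearMap.snd ℝ ℝ ℝ).hasFDerivAt.comp x hdw
  have hF : HasFDerivAt (fun y => (w y).1 * (w y).1 + (w y).2 * (w y).2)
      ((w x).1 • ((ContinuousLinearMap.fst ℝ ℝ ℝ).comp (fderiv ℝ w x)) +
        (w x).1 • ((ContinuousLinearMap.fst ℝ ℝ ℝ).comp (fderiv ℝ w x)) +
       ((w x).2 • ((ContinuousLinearMap.snd ℝ ℝ ℝ).comp (fderiv ℝ w x)) +
        (w x).2 • ((ContinuousLinearMap.snd ℝ ℝ ℝ).comp (fderiv ℝ w x)))) x :=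
    (h1.mul h1).add (h2.mul h2)
  have hconst : HasFDerivAt (fun y => (w y).1 * (w y).1 + (w y).2 * (w y).2)
      (0 : (ℝ × ℝ) →L[ℝ] ℝ) x := by
    have : (fun y => (w y).1 * (w y).1 + (w y).2 * (w y).2) = fun _ => (1:ℝ) :=
      funext fun y => hunit y
    rw [this]; exact hasFDerivAt_const 1 x
  have heq := hF.unique hconst
  have h := congrArg (fun L : (ℝ × ℝ) →L[ℝ] ℝ => L a) heq
  simp only [ContinuousLinearMap.add_apply, ContinuousLinearMap.smul_apply,
    ContinuousLinearMap.comp_apply, ContinuousLinearMap.coe_fst',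
    ContinuousLinearMap.coe_snd', ContinuousLinearMap.zero_apply, smul_eq_mul] at h
  linarith

lemma aux_basis (A : (ℝ × ℝ) →L[ℝ] (ℝ × ℝ)) (s t : ℝ) :
    A (s, t) = s • A (1, 0) + t • A (0, 1) := by
  have h : (s, t) = s • ((1:ℝ), (0:ℝ)) + t • ((0:ℝ), (1:ℝ)) := by
    simp [Prod.ext_iff]
  rw [h, A.map_add, A.map_smul, A.map_smul]

lemma aux_perp (w : ℝ × ℝ → ℝ × ℝ) (hw : ContDiff ℝ 1 w)
    (hunit : ∀ x, (w x).1 * (w x).1 + (w x).2 * (w x).2 = 1)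
    (hline : ∀ (x : ℝ × ℝ) (t : ℝ), 0 ≤ t → w (x + t • w x) = w x) (x : ℝ × ℝ) :
    fderiv ℝ w x (perp (w x)) = dvg w x • perp (w x) := by
  have hAe' : (w x).1 • fderiv ℝ w x (1, 0) + (w x).2 • fderiv ℝ w x (0, 1) = 0 := by
    rw [← aux_basis]
    have : ((w x).1, (w x).2) = w x := rfl
    rw [this]
    exact aux_line w hw hline x
  have h11 : (w x).1 * (fderiv ℝ w x (1, 0)).1 + (w x).2 * (fderiv ℝ w x (0, 1)).1 = 0 := by
    have h := congrArg Prod.fst hAe'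
    simp only [Prod.fst_add, Prod.smul_fst, smul_eq_mul, Prod.fst_zero] at h
    linear_combination h
  have h12 : (w x).1 * (fderiv ℝ w x (1, 0)).2 + (w x).2 * (fderiv ℝ w x (0, 1)).2 = 0 := by
    have h := congrArg Prod.snd hAe'
    simp only [Prod.snd_add, Prod.smul_snd, smul_eq_mul, Prod.snd_zero] at h
    linear_combination h
  have hz : fderiv ℝ w x (-(w x).2, (w x).1)
      = (-(w x).2) • fderiv ℝ w x (1, 0) + (w x).1 • fderiv ℝ w x (0, 1) :=
    aux_basis _ _ _
  have horth := aux_orth w hw hunit x (-(w x).2, (w x).1)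
  rw [hz] at horth
  simp only [Prod.fst_add, Prod.snd_add, Prod.smul_fst, Prod.smul_snd, smul_eq_mul] at horth
  have h3 : (w x).1 * (-(w x).2 * (fderiv ℝ w x (1, 0)).1 + (w x).1 * (fderiv ℝ w x (0, 1)).1)
      + (w x).2 * (-(w x).2 * (fderiv ℝ w x (1, 0)).2 + (w x).1 * (fderiv ℝ w x (0, 1)).2)
      = 0 := by linear_combination horth
  have e := aux_alg (w x).1 (w x).2 (fderiv ℝ w x (1, 0)).1 (fderiv ℝ w x (1, 0)).2
    (fderiv ℝ w x (0, 1)).1 (fderiv ℝ w x (0, 1)).2 (hunit x) h11 h12 h3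
  show fderiv ℝ w x (-(w x).2, (w x).1)
      = ((fderiv ℝ w x (1, 0)).1 + (fderiv ℝ w x (0, 1)).2) • (-(w x).2, (w x).1)
  rw [hz]
  refine Prod.ext ?_ ?_
  · simp only [Prod.fst_add, Prod.smul_fst, smul_eq_mul]
    linear_combination e.1
  · simp only [Prod.snd_add, Prod.smul_snd, smul_eq_mul]
    linear_combination e.2

theorem stmt19
    (u v : ℝ × ℝ → ℝ × ℝ) (hu : ContDiff ℝ 1 u) (hv : ContDiff ℝ 1 v)
    (hunitu : ∀ x, dot (u x) (u x) = 1) (hunitv : ∀ x, dot (v x) (v x) = 1)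
    (hlineu : ∀ (x : ℝ × ℝ) (t : ℝ), 0 ≤ t → u (x + t • u x) = u x)
    (hlinev : ∀ (x : ℝ × ℝ) (t : ℝ), 0 ≤ t → v (x + t • v x) = v x) :
    ∀ x : ℝ × ℝ,
      (fderiv ℝ u x (u x) = 0 ∧ fderiv ℝ (fun y => perp (u y)) x (u x) = 0) ∧
      fderiv ℝ u x (perp (u x)) = dvg u x • perp (u x) ∧
      fderiv ℝ v x (u x) = (dot (u x) (perp (v x)) * dvg v x) • perp (v x) := by
  have hunitu' : ∀ x, (u x).1 * (u x).1 + (u x).2 * (u x).2 = 1 := fun x => hunitu x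
  have hunitv' : ∀ x, (v x).1 * (v x).1 + (v x).2 * (v x).2 = 1 := fun x => hunitv x
  intro x
  have hu0 : fderiv ℝ u x (u x) = 0 := aux_line u hu hlineu x
  have hv0 : fderiv ℝ v x (v x) = 0 := aux_line v hv hlinev x
  refine ⟨⟨hu0, ?_⟩, aux_perp u hu hunitu' hlineu x, ?_⟩
  · -- derivative of perp ∘ u along u
    have hdu : HasFDerivAt u (fderiv ℝ u x) x := (hu.differentiable one_ne_zero x).hasFDerivAt
    have h1 : HasFDerivAt (fun y => (u y).1)
        ((ContinuousLinearMap.fst ℝ ℝ ℝ).comp (fderiv ℝ u x)) x :=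
      (ContinuousLinearMap.fst ℝ ℝ ℝ).hasFDerivAt.comp x hdu
    have h2 : HasFDerivAt (fun y => (u y).2)
        ((ContinuousLinearMap.snd ℝ ℝ ℝ).comp (fderiv ℝ u x)) x :=
      (ContinuousLinearMap.snd ℝ ℝ ℝ).hasFDerivAt.comp x hdu
    have hp : HasFDerivAt (fun y => perp (u y))
        ((-(ContinuousLinearMap.snd ℝ ℝ ℝ).comp (fderiv ℝ u x)).prod
          ((ContinuousLinearMap.fst ℝ ℝ ℝ).comp (fderiv ℝ u x))) x := HasFDerivAt.prodMk h2.neg h1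
    rw [hp.fderiv]
    simp [hu0]
  · -- third part
    have hvperp : fderiv ℝ v x (perp (v x)) = dvg v x • perp (v x) :=
      aux_perp v hv hunitv' hlinev x
    have hdecomp : u x = (dot (u x) (v x)) • v x + (dot (u x) (perp (v x))) • perp (v x) := by
      have h4 := hunitv' x
      refine Prod.ext ?_ ?_
      · simp only [Prod.fst_add, Prod.smul_fst, smul_eq_mul, dot, perp]
        linear_combination -(u x).1 * h4
      · simp only [Prod.snd_add, Prod.smul_snd, smul_eq_mul, dot, perp]
        linear_combination -(u x).2 * h4
    have step : fderiv ℝ v x (u x)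
        = (dot (u x) (v x)) • fderiv ℝ v x (v x)
          + (dot (u x) (perp (v x))) • fderiv ℝ v x (perp (v x)) := by
      conv_lhs => rw [hdecomp]
      rw [(fderiv ℝ v x).map_add, (fderiv ℝ v x).map_smul, (fderiv ℝ v x).map_smul]
    rw [step, hv0, hvperp, smul_zero, zero_add, smul_smul]
end
end
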